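/- Let H = ⟨a, a+1⟩ with a ≥ 2, let k be a field, A = k[[t^a, t^{a+1}]] ⊆ k[[t]], and 𝔪 = (t^a, t^{a+1}) the maximal ideal of A. Then for every integer ℓ ≥ 0, the ideal 𝔪^ℓ is generated by the monomials t^{aℓ+i} for 0 ≤ i ≤ ℓ, and equals the ideal generated by all t^n with n ∈ H and n ≥ aℓ. -/

import Mathlib

set_option maxHeartbeats 1000000
set_option synthInstance.maxHeartbeats 1000000

open PowerSeries

/-- The numerical semigroup ring `k[[H]]`: power series supported on `H`. -/
noncomputable def ssr (k : Type) [Field k] (H : AddSubmonoid ℕ) :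
    Subalgebra k (PowerSeries k) where
  carrier := {f | ∀ n : ℕ, n ∉ H → PowerSeries.coeff n f = 0}
  mul_mem' := by
    intro f g hf hg n hn
    rw [Set.mem_setOf_eq] at hf hg
    rw [PowerSeries.coeff_mul]
    apply Finset.sum_eq_zero
    rintro ⟨i, j⟩ hij
    replace hij : i + j = n := by simpa using hij
    by_cases hi : i ∈ H
    · have hj : j ∉ H := fun hj => hn (hij ▸ H.add_mem hi hj)
      rw [hg j hj, mul_zero]
    · rw [hf i hi, zero_mul]
  add_mem' := by
    intro f g hf hg n hn
    rw [Set.mem_setOf_eq] at hf hg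
    rw [map_add, hf n hn, hg n hn, add_zero]
  one_mem' := by
    intro n hn
    have h0 : n ≠ 0 := fun h => hn (by rw [h]; exact H.zero_mem)
    simp [PowerSeries.coeff_one, h0]
  zero_mem' := by
    intro n _
    simp
  algebraMap_mem' := by
    intro r n hn
    have h0 : n ≠ 0 := fun h => hn (by rw [h]; exact H.zero_mem)
    simp [PowerSeries.algebraMap_apply, PowerSeries.coeff_C, h0]

/-- The monomial `t^n` as an element of `k[[H]]`, for `n ∈ H`. -/
noncomputable def tp (k : Type) [Field k] (H : AddSubmonoid ℕ) (n : ℕ) (hn : n ∈ H) :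
    ssr k H :=
  ⟨PowerSeries.X ^ n, by
    intro m hm
    rw [PowerSeries.coeff_X_pow]
    exact if_neg (fun h => hm (by rw [h]; exact hn))⟩

/-- The maximal ideal of `k[[H]]`, generated by the monomials `t^n`, `0 < n ∈ H`. -/
noncomputable def mIdeal (k : Type) [Field k] (H : AddSubmonoid ℕ) : Ideal (ssr k H) :=
  Ideal.span {x | ∃ n : ℕ, ∃ hn : n ∈ H, 0 < n ∧ x = tp k H n hn}

section Aux

variable {k : Type} [Field k] {H : AddSubmonoid ℕ}

lemma tp_mul (m n : ℕ) (hm : m ∈ H) (hn : n ∈ H) :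
    tp k H m hm * tp k H n hn = tp k H (m + n) (H.add_mem hm hn) := by
  apply Subtype.ext
  show (PowerSeries.X : PowerSeries k) ^ m * PowerSeries.X ^ n = PowerSeries.X ^ (m + n)
  rw [pow_add]

lemma tp_congr {m n : ℕ} (h : m = n) (hm : m ∈ H) (hn : n ∈ H) :
    tp k H m hm = tp k H n hn := by subst h; rfl

lemma tp_zero : tp k H 0 H.zero_mem = 1 := by
  apply Subtype.ext
  show (PowerSeries.X : PowerSeries k) ^ 0 = 1
  rw [pow_zero]

end Aux

/-- Lemma 3.1 (2): `𝔪^ℓ = (t^{aℓ+i} : 0 ≤ i ≤ ℓ) = (t^n : n ∈ H, n ≥ aℓ)` in `k[[t^a, t^{a+1}]]`. -/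
theorem stmt3 (k : Type) [Field k] (a : ℕ) (ha : 2 ≤ a)
    (H : AddSubmonoid ℕ) (hH : H = AddSubmonoid.closure {a, a + 1})
    (haH : a ∈ H) (ha1H : a + 1 ∈ H) (ℓ : ℕ) :
    Ideal.span {tp k H a haH, tp k H (a + 1) ha1H} ^ ℓ =
        Ideal.span {x : ssr k H | ∃ i ≤ ℓ, ∃ hn : a * ℓ + i ∈ H, x = tp k H (a * ℓ + i) hn} ∧
    Ideal.span {tp k H a haH, tp k H (a + 1) ha1H} ^ ℓ =
        Ideal.span {x : ssr k H | ∃ n : ℕ, ∃ hn : n ∈ H, a * ℓ ≤ n ∧ x = tp k H n hn} := by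
  have ha0 : 0 < a := by omega
  have hmem : ∀ u v : ℕ, u * a + v * (a + 1) ∈ H := fun u v =>
    H.add_mem (by simpa using H.nsmul_mem haH u) (by simpa using H.nsmul_mem ha1H v)
  have hgen : ∀ L i : ℕ, i ≤ L → a * L + i ∈ H := by
    intro L i hi
    obtain ⟨d, rfl⟩ := Nat.exists_eq_add_of_le hi
    have h1 : a * (i + d) + i = d * a + i * (a + 1) := by ring
    rw [h1]
    exact hmem d i
  have key1 : ∀ L : ℕ, Ideal.span {tp k H a haH, tp k H (a + 1) ha1H} ^ L =
      Ideal.span {x : ssr k H | ∃ i ≤ L, ∃ hn : a * L + i ∈ H, x = tp k H (a * L + i) hn} := by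
    intro L
    induction L with
    | zero =>
      rw [pow_zero, Ideal.one_eq_top, eq_comm, Ideal.eq_top_iff_one]
      apply Ideal.subset_span
      exact ⟨0, le_rfl, by simpa using H.zero_mem,
        ((tp_congr (show a * 0 + 0 = 0 by ring) _ H.zero_mem).trans tp_zero).symm⟩
    | succ L IH =>
      rw [pow_succ, IH, Ideal.span_mul_span']
      apply le_antisymm
      · rw [Ideal.span_le]
        intro x hx
        rw [Set.mem_mul] at hx
        obtain ⟨y, hy, z, hz, rfl⟩ := hx
        obtain ⟨i, hiL, hni, rfl⟩ := hy
        apply Ideal.subset_span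
        simp only [Set.mem_insert_iff, Set.mem_singleton_iff] at hz
        rcases hz with rfl | rfl
        · refine ⟨i, by omega, hgen (L + 1) i (by omega), ?_⟩
          rw [tp_mul]
          exact tp_congr (by ring) _ _
        · refine ⟨i + 1, by omega, hgen (L + 1) (i + 1) (by omega), ?_⟩
          rw [tp_mul]
          exact tp_congr (by ring) _ _
      · rw [Ideal.span_le]
        rintro x ⟨i, hi, hni, rfl⟩
        apply Ideal.subset_span
        by_cases hiL : i ≤ L
        · have e : tp k H (a * (L + 1) + i) hni =
              tp k H (a * L + i) (hgen L i hiL) * tp k H a haH := by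
            rw [tp_mul]; exact tp_congr (by ring) _ _
          rw [e]
          exact Set.mul_mem_mul ⟨i, hiL, hgen L i hiL, rfl⟩ (Set.mem_insert _ _)
        · have hiE : i = L + 1 := by omega
          subst hiE
          have e : tp k H (a * (L + 1) + (L + 1)) hni =
              tp k H (a * L + L) (hgen L L le_rfl) * tp k H (a + 1) ha1H := by
            rw [tp_mul]; exact tp_congr (by ring) _ _
          rw [e]
          exact Set.mul_mem_mul ⟨L, le_rfl, hgen L L le_rfl, rfl⟩
            (Set.mem_insert_iff.mpr (Or.inr rfl))
  have key2 : Ideal.span {x : ssr k H | ∃ i ≤ ℓ, ∃ hn : a * ℓ + i ∈ H, x = tp k H (a * ℓ + i) hn} =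
      Ideal.span {x : ssr k H | ∃ n : ℕ, ∃ hn : n ∈ H, a * ℓ ≤ n ∧ x = tp k H n hn} := by
    apply le_antisymm
    · rw [Ideal.span_le]
      rintro x ⟨i, hi, hni, rfl⟩
      exact Ideal.subset_span ⟨a * ℓ + i, hni, Nat.le_add_right _ _, rfl⟩
    · rw [Ideal.span_le]
      rintro x ⟨n, hn, hln, rfl⟩
      obtain ⟨q, r, hn_eq, hr_lt, hrq⟩ : ∃ q r : ℕ, n = a * q + r ∧ r < a ∧ r ≤ q := by
        refine ⟨n / a, n % a, (Nat.div_add_mod n a).symm, Nat.mod_lt n ha0, ?_⟩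
        have hn' := hn
        rw [hH, AddSubmonoid.mem_closure_pair] at hn'
        obtain ⟨u, v, huv⟩ := hn'
        simp only [smul_eq_mul] at huv
        have hrep : n = v + (u + v) * a := by rw [← huv]; ring
        have h1 : n % a = v % a := by rw [hrep, Nat.add_mul_mod_self_right]
        have h2 : n / a = v / a + (u + v) := by
          rw [hrep, Nat.add_mul_div_right _ _ ha0]
        calc n % a = v % a := h1
          _ ≤ v := Nat.mod_le v a
          _ ≤ v / a + (u + v) := by generalize v / a = w; omega
          _ = n / a := h2.symm
      have hq : ℓ ≤ q := by
        by_contra hcon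
        push_neg at hcon
        have h5 : a * (q + 1) ≤ a * ℓ := Nat.mul_le_mul_left a hcon
        have h6 : a * (q + 1) = a * q + a := by ring
        linarith
      obtain ⟨d, rfl⟩ := Nat.exists_eq_add_of_le hq
      by_cases hrl : r ≤ ℓ
      · have hmH : d * a ∈ H := by simpa using hmem d 0
        have e : tp k H n hn =
            tp k H (d * a) hmH * tp k H (a * ℓ + r) (hgen ℓ r hrl) :=
          (tp_congr (show n = d * a + (a * ℓ + r) by rw [hn_eq]; ring) hn
            (H.add_mem hmH (hgen ℓ r hrl))).trans (tp_mul _ _ _ _).symm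
        rw [e]
        exact Ideal.mul_mem_left _ _ (Ideal.subset_span ⟨r, hrl, hgen ℓ r hrl, rfl⟩)
      · push_neg at hrl
        obtain ⟨f, rfl⟩ := Nat.exists_eq_add_of_le hrl.le
        have hfd : f ≤ d := by omega
        obtain ⟨g, rfl⟩ := Nat.exists_eq_add_of_le hfd
        have hmH : g * a + f * (a + 1) ∈ H := hmem g f
        have e : tp k H n hn =
            tp k H (g * a + f * (a + 1)) hmH * tp k H (a * ℓ + ℓ) (hgen ℓ ℓ le_rfl) :=
          (tp_congr (show n = (g * a + f * (a + 1)) + (a * ℓ + ℓ) by rw [hn_eq]; ring) hn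
            (H.add_mem hmH (hgen ℓ ℓ le_rfl))).trans (tp_mul _ _ _ _).symm
        rw [e]
        exact Ideal.mul_mem_left _ _ (Ideal.subset_span ⟨ℓ, le_rfl, hgen ℓ ℓ le_rfl, rfl⟩)
  exact ⟨key1 ℓ, (key1 ℓ).trans key2⟩
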